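/- Let λ, μ ∈ ℕ and s ≥ 1 a real number with λ ≥ 3seμ, let n ≥ 1, let p ∈ [0,1] with p ≥ b ≥ 2/n for some b > 0, and let X be a binomially distributed random variable X ~ Bin(λ, q) with success probability q ≥ p·(1 − 1/n)^{n−1}. Then E[X] ≥ 3sμp, and Pr[X ≤ (5/2)·s·μ·p] ≤ exp(−sμb/24). -/

import Mathlib

set_option maxHeartbeats 1000000

open MeasureTheory Finset

lemma nullMeas_of_add_compl {α : Type*} [MeasurableSpace α] (μ : Measure α) [IsProbabilityMeasure μ]
    (s : Set α) (h : μ s + μ sᶜ ≤ μ Set.univ) : NullMeasurableSet s μ := by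
  set B := toMeasurable μ s with hBdef
  set C := toMeasurable μ sᶜ with hCdef
  have hB : MeasurableSet B := measurableSet_toMeasurable μ s
  have hC : MeasurableSet C := measurableSet_toMeasurable μ sᶜ
  have hsB : s ⊆ B := subset_toMeasurable μ s
  have hscC : sᶜ ⊆ C := subset_toMeasurable μ sᶜ
  have hunion : B ∪ C = Set.univ := by
    apply Set.eq_univ_of_univ_subset
    intro x _
    by_cases hx : x ∈ s
    · exact Or.inl (hsB hx)
    · exact Or.inr (hscC hx)
  have hkey : μ (B ∪ C) + μ (B ∩ C) = μ B + μ C := measure_union_add_inter B hC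
  have h0 : μ (B ∩ C) = 0 := by
    rw [hunion] at hkey
    rw [measure_toMeasurable, measure_toMeasurable] at hkey
    have h2 : μ Set.univ + μ (B ∩ C) ≤ μ Set.univ := by rw [hkey]; exact h
    have huniv : μ Set.univ ≠ ⊤ := measure_ne_top μ _
    by_contra hne
    have : μ Set.univ < μ Set.univ + μ (B ∩ C) := ENNReal.lt_add_right huniv hne
    exact absurd h2 (not_le.mpr this)
  have hdiff : B \ s ⊆ B ∩ C := fun x hx => ⟨hx.1, hscC hx.2⟩
  have hseq : s = B \ (B \ s) := by
    ext x
    constructor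
    · intro hx; exact ⟨hsB hx, fun hx2 => hx2.2 hx⟩
    · intro hx
      by_contra hxs
      exact hx.2 ⟨hx.1, hxs⟩
  rw [hseq]
  exact hB.nullMeasurableSet.diff (NullMeasurableSet.of_null (measure_mono_null hdiff h0))

lemma binom_sum (N : ℕ) (x y : ℝ) :
    ∑ m ∈ Finset.range (N + 1), (N.choose m : ℝ) * x ^ m * y ^ (N - m) = (x + y) ^ N := by
  rw [add_pow]
  exact Finset.sum_congr rfl fun m _ => by ring

lemma exp_bound_key : Real.exp (-(9/50)) ≤ 301/360 := by
  have h1 : (1009/1000 : ℝ) ≤ Real.exp (9/1000) := by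
    have := Real.add_one_le_exp (9/1000 : ℝ)
    linarith
  have h2 : ((1009/1000 : ℝ)) ^ (20:ℕ) ≤ (Real.exp (9/1000)) ^ (20:ℕ) :=
    pow_le_pow_left₀ (by norm_num) h1 20
  have h3 : (Real.exp (9/1000)) ^ (20:ℕ) = Real.exp (9/50) := by
    rw [← Real.exp_nat_mul]; norm_num
  have h4 : (360/301 : ℝ) ≤ (1009/1000 : ℝ) ^ (20:ℕ) := by norm_num
  have h5 : (360/301 : ℝ) ≤ Real.exp (9/50) := by rw [← h3]; linarith
  rw [Real.exp_neg, inv_le_iff_one_le_mul₀ (Real.exp_pos _)]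
  nlinarith [Real.exp_pos (9/50 : ℝ)]

lemma one_sub_inv_pow_ge (n : ℕ) (hn : 1 ≤ n) :
    Real.exp (-1) ≤ (1 - ((n : ℝ))⁻¹) ^ (n - 1) := by
  rcases Nat.eq_or_lt_of_le hn with h1 | h2
  · simp [← h1]
  · set m := n - 1 with hm
    have hm1 : 1 ≤ m := by omega
    have hmn : (m : ℝ) = (n : ℝ) - 1 := by
      have : n = m + 1 := by omega
      rw [this]; push_cast; ring
    have hn0 : (0:ℝ) < n := by positivity
    have hm0 : (0:ℝ) < m := by
      rw [hmn]; have : (2:ℝ) ≤ n := by exact_mod_cast h2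
      linarith
    have hstep : Real.exp (-(1/(m:ℝ))) ≤ 1 - ((n:ℝ))⁻¹ := by
      have h3 : 1 + 1/(m:ℝ) ≤ Real.exp (1/(m:ℝ)) := by
        have := Real.add_one_le_exp (1/(m:ℝ)); linarith
      have hm0' : (m:ℝ) ≠ 0 := ne_of_gt hm0
      have h4 : 1 + 1/(m:ℝ) = (n:ℝ)/(m:ℝ) := by
        field_simp
        linarith [hmn]
      have h6 : 1 - ((n:ℝ))⁻¹ = (m:ℝ)/(n:ℝ) := by
        field_simp [hmn]
        linarith [hmn]
      rw [Real.exp_neg, h6, inv_le_iff_one_le_mul₀ (Real.exp_pos _)]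
      have h7 : (n:ℝ)/(m:ℝ) * ((m:ℝ)/(n:ℝ)) = 1 := by field_simp
      calc (1:ℝ) = (n:ℝ)/(m:ℝ) * ((m:ℝ)/(n:ℝ)) := h7.symm
        _ ≤ Real.exp (1/(m:ℝ)) * ((m:ℝ)/(n:ℝ)) := by
            apply mul_le_mul_of_nonneg_right (le_trans (by linarith) h3) (by positivity)
        _ = (m:ℝ)/(n:ℝ) * Real.exp (1/(m:ℝ)) := by ring
    have hpow : (Real.exp (-(1/(m:ℝ)))) ^ m ≤ (1 - ((n:ℝ))⁻¹) ^ m :=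
      pow_le_pow_left₀ (le_of_lt (Real.exp_pos _)) hstep m
    have hexp : (Real.exp (-(1/(m:ℝ)))) ^ m = Real.exp (-1) := by
      rw [← Real.exp_nat_mul]
      congr 1
      field_simp
    rw [← hexp]; exact hpow

lemma binom_mean (N : ℕ) (hN : 1 ≤ N) (x : ℝ) :
    ∑ m ∈ Finset.range (N + 1), (m : ℝ) * ((N.choose m : ℝ) * x ^ m * (1-x) ^ (N - m))
      = (N : ℝ) * x := by
  rw [Finset.sum_range_succ']
  simp only [Nat.cast_zero, zero_mul, add_zero]
  have key : ∀ j ∈ Finset.range N,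
      ((j+1 : ℕ) : ℝ) * ((N.choose (j+1) : ℝ) * x ^ (j+1) * (1-x) ^ (N - (j+1)))
        = (N : ℝ) * x * (((N-1).choose j : ℝ) * x ^ j * (1-x) ^ ((N-1) - j)) := by
    intro j hj
    have hjN : j < N := Finset.mem_range.mp hj
    have hc : (N:ℕ) * (N-1).choose j = N.choose (j+1) * (j+1) := by
      have := Nat.add_one_mul_choose_eq (N-1) j
      have hN1 : N - 1 + 1 = N := by omega
      rw [hN1] at this
      exact this
    have hcR : ((N:ℝ)) * ((N-1).choose j : ℝ) = (N.choose (j+1) : ℝ) * ((j+1:ℕ) : ℝ) := by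
      exact_mod_cast congrArg (Nat.cast : ℕ → ℝ) hc
    have hsub : N - (j+1) = (N-1) - j := by omega
    rw [hsub, pow_succ']
    linear_combination -(x * x ^ j * (1 - x) ^ (N - 1 - j)) * hcR
  rw [Finset.sum_congr rfl key, ← Finset.mul_sum]
  have hsum : ∑ j ∈ Finset.range N, (((N-1).choose j : ℝ) * x ^ j * (1-x) ^ ((N-1) - j))
      = (x + (1-x)) ^ (N-1) := by
    have hN1 : N = (N-1) + 1 := by omega
    rw [hN1]
    simp only [Nat.add_sub_cancel]
    rw [add_pow]
    exact Finset.sum_congr rfl fun m _ => by ring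
  rw [hsum]
  simp

theorem binomial_critical_position_estimate
    {Ω : Type*} [MeasurableSpace Ω] (Pr : Measure Ω) [IsProbabilityMeasure Pr]
    (lam mu n : ℕ) (hmu : 1 ≤ mu) (hn : 1 ≤ n)
    (s : ℝ) (hs : 1 ≤ s)
    (hlam : 3 * s * Real.exp 1 * (mu : ℝ) ≤ (lam : ℝ))
    (b p q : ℝ) (hb0 : 0 < b) (hbn : 2 / (n : ℝ) ≤ b) (hbp : b ≤ p)
    (hp0 : 0 ≤ p) (hp1 : p ≤ 1) (hq0 : 0 ≤ q) (hq1 : q ≤ 1)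
    (hq : p * (1 - ((n : ℝ))⁻¹) ^ (n - 1) ≤ q)
    (X : Ω → ℕ)
    (hX : ∀ m : ℕ, Pr {ω | X ω = m}
      = ENNReal.ofReal ((lam.choose m : ℝ) * q ^ m * (1 - q) ^ (lam - m))) :
    3 * s * (mu : ℝ) * p ≤ ∫ ω, (X ω : ℝ) ∂Pr ∧
      Pr {ω | (X ω : ℝ) ≤ (5 / 2) * s * (mu : ℝ) * p}
        ≤ ENNReal.ofReal (Real.exp (-(s * (mu : ℝ) * b) / 24)) := by
  classical
  set f : ℕ → ℝ := fun m => (lam.choose m : ℝ) * q ^ m * (1 - q) ^ (lam - m) with hfdef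
  have hq1' : (0:ℝ) ≤ 1 - q := by linarith
  have hf0 : ∀ m, 0 ≤ f m := fun m =>
    mul_nonneg (mul_nonneg (Nat.cast_nonneg _) (pow_nonneg hq0 _)) (pow_nonneg hq1' _)
  have hfzero : ∀ m, lam < m → f m = 0 := fun m hm => by
    simp [hfdef, Nat.choose_eq_zero_of_lt hm]
  have hfsum : ∑ m ∈ Finset.range (lam+1), f m = 1 := by
    have h := binom_sum lam q (1-q)
    rw [show q + (1-q) = 1 by ring, one_pow] at h
    exact h
  -- basic numeric facts
  have hmu1 : (1:ℝ) ≤ (mu:ℝ) := by exact_mod_cast hmu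
  have he2 : (2:ℝ) ≤ Real.exp 1 := by nlinarith [Real.add_one_le_exp (1:ℝ)]
  have hse2 : (2:ℝ) ≤ s * Real.exp 1 := by
    nlinarith [mul_nonneg (sub_nonneg.mpr hs) (by positivity : (0:ℝ) ≤ Real.exp 1)]
  have hsem2 : (2:ℝ) ≤ s * Real.exp 1 * (mu:ℝ) := by
    nlinarith [mul_nonneg (by linarith : (0:ℝ) ≤ s * Real.exp 1 - 2) (sub_nonneg.mpr hmu1)]
  have hlam6 : (6:ℝ) ≤ (lam:ℝ) := by nlinarith
  have hlam1 : 1 ≤ lam := by exact_mod_cast (by linarith : (1:ℝ) ≤ (lam:ℝ))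
  have hsm0 : (0:ℝ) ≤ s * (mu:ℝ) := by nlinarith
  -- q ≥ p / e and expectation lower bound
  have hqe : p * Real.exp (-1) ≤ q :=
    le_trans (mul_le_mul_of_nonneg_left (one_sub_inv_pow_ge n hn) hp0) hq
  have hE : 3 * s * (mu:ℝ) * p ≤ (lam:ℝ) * q := by
    have h1 : 3 * s * Real.exp 1 * (mu:ℝ) * (p * Real.exp (-1)) ≤ (lam:ℝ) * q :=
      mul_le_mul hlam hqe (mul_nonneg hp0 (Real.exp_pos _).le) (Nat.cast_nonneg lam)
    have h2 : Real.exp 1 * Real.exp (-1) = 1 := by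
      rw [← Real.exp_add]; norm_num
    have h3 : 3 * s * Real.exp 1 * (mu:ℝ) * (p * Real.exp (-1)) = 3 * s * (mu:ℝ) * p := by
      rw [show 3 * s * Real.exp 1 * (mu:ℝ) * (p * Real.exp (-1))
          = 3 * s * (mu:ℝ) * p * (Real.exp 1 * Real.exp (-1)) from by ring, h2, mul_one]
    linarith [h1]
  -- total mass
  have htsum : ∑' m : ℕ, Pr {ω | X ω = m} = 1 := by
    have h1 : ∑' m : ℕ, Pr {ω | X ω = m} = ∑ m ∈ Finset.range (lam+1), Pr {ω | X ω = m} := by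
      apply tsum_eq_sum
      intro m hm
      rw [hX m]
      have : f m = 0 := hfzero m (by simpa using hm)
      rw [hfdef] at this
      simp only [this]
      simp
    rw [h1]
    have h2 : ∀ m ∈ Finset.range (lam+1), Pr {ω | X ω = m} = ENNReal.ofReal (f m) :=
      fun m _ => hX m
    rw [Finset.sum_congr rfl h2, ← ENNReal.ofReal_sum_of_nonneg (fun m _ => hf0 m), hfsum]
    simp
  -- null measurability of level sets
  have hnm : ∀ m : ℕ, NullMeasurableSet {ω | X ω = m} Pr := by
    intro m
    apply nullMeas_of_add_compl
    have hsub : {ω | X ω = m}ᶜ ⊆ ⋃ k : ℕ, (if k = m then (∅ : Set Ω) else {ω | X ω = k}) := by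
      intro ω hω
      simp only [Set.mem_compl_iff, Set.mem_setOf_eq] at hω
      refine Set.mem_iUnion.mpr ⟨X ω, ?_⟩
      rw [if_neg hω]
      simp
    have h2 : Pr ({ω | X ω = m}ᶜ) ≤ ∑' k : ℕ, Pr (if k = m then (∅:Set Ω) else {ω | X ω = k}) :=
      le_trans (measure_mono hsub) (measure_iUnion_le _)
    have h3 : ∀ k : ℕ, Pr (if k = m then (∅:Set Ω) else {ω | X ω = k})
        = (if k = m then 0 else Pr {ω | X ω = k}) := by
      intro k; split <;> simp
    have h4 : Pr {ω | X ω = m} + ∑' k : ℕ, (if k = m then 0 else Pr {ω | X ω = k}) = 1 := by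
      rw [← htsum]
      convert (ENNReal.tsum_eq_add_tsum_ite (f := fun k : ℕ => Pr {ω | X ω = k}) m).symm
    calc Pr {ω | X ω = m} + Pr ({ω | X ω = m}ᶜ)
        ≤ Pr {ω | X ω = m} + ∑' k : ℕ, (if k = m then 0 else Pr {ω | X ω = k}) := by
          rw [tsum_congr h3] at h2
          exact add_le_add_right h2 _
      _ = 1 := h4
      _ = Pr Set.univ := (measure_univ).symm
  have hNM : NullMeasurable X Pr := by
    intro t ht
    have : X ⁻¹' t = ⋃ m ∈ t, {ω | X ω = m} := by
      ext ω; simp [Set.mem_iUnion]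
    rw [this]
    exact NullMeasurableSet.biUnion t.to_countable (fun m _ => hnm m)
  have hXae : AEMeasurable X Pr := hNM.aemeasurable
  set g : Ω → ℕ := hXae.mk X with hgdef
  have hg : Measurable g := hXae.measurable_mk
  have hxg : X =ᵐ[Pr] g := hXae.ae_eq_mk
  have hsetEq : ∀ m : ℕ, Pr {ω | g ω = m} = ENNReal.ofReal (f m) := by
    intro m
    rw [← hX m]
    apply measure_congr
    rw [Filter.eventuallyEq_set]
    filter_upwards [hxg] with ω h
    simp [h]
  have hgmeas : ∀ m : ℕ, MeasurableSet {ω | g ω = m} := fun m =>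
    hg (measurableSet_singleton m)
  have hgt : Pr {ω | lam < g ω} = 0 := by
    have hsub : {ω | lam < g ω} ⊆ ⋃ k : ℕ, {ω | g ω = lam + 1 + k} := by
      intro ω hω
      simp only [Set.mem_setOf_eq] at hω
      exact Set.mem_iUnion.mpr ⟨g ω - (lam+1), by simp only [Set.mem_setOf_eq]; omega⟩
    have h1 := le_trans (measure_mono hsub)
      (measure_iUnion_le (μ := Pr) (s := fun k : ℕ => {ω | g ω = lam + 1 + k}))
    have h2 : ∀ k : ℕ, Pr {ω | g ω = lam + 1 + k} = 0 := by
      intro k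
      rw [hsetEq, hfzero _ (by omega)]
      simp
    refine le_antisymm (le_trans h1 ?_) (by simp)
    simp [h2]
  -- expectation
  have hint : ∫ ω, (X ω : ℝ) ∂Pr = (lam : ℝ) * q := by
    have hXg : (fun ω => (X ω : ℝ)) =ᵐ[Pr] (fun ω => (g ω : ℝ)) := by
      filter_upwards [hxg] with ω h; rw [h]
    rw [integral_congr_ae hXg]
    have hae : ∀ᵐ ω ∂Pr, g ω ≤ lam := by
      rw [ae_iff]
      have : {ω | ¬ g ω ≤ lam} = {ω | lam < g ω} := by ext ω; simp [not_le]
      rw [this]; exact hgt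
    have hFae : (fun ω => (g ω : ℝ)) =ᵐ[Pr]
        (fun ω => ∑ m ∈ Finset.range (lam+1),
          Set.indicator {ω' | g ω' = m} (fun _ => (m:ℝ)) ω) := by
      filter_upwards [hae] with ω hω
      rw [eq_comm, Finset.sum_eq_single (g ω)]
      · simp [Set.indicator_apply]
      · intro m _ hne
        apply Set.indicator_of_notMem
        simp only [Set.mem_setOf_eq]
        exact fun h => hne (h ▸ rfl)
      · intro h
        exact absurd (Finset.mem_range.mpr (by omega)) h
    rw [integral_congr_ae hFae, integral_finset_sum _
      (fun m _ => (integrable_const ((m:ℕ):ℝ)).indicator (hgmeas m))]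
    have hterm : ∀ m ∈ Finset.range (lam+1),
        ∫ ω, Set.indicator {ω' | g ω' = m} (fun _ => (m:ℝ)) ω ∂Pr = (m:ℝ) * f m := by
      intro m _
      rw [integral_indicator_const _ (hgmeas m), measureReal_def, hsetEq m,
        ENNReal.toReal_ofReal (hf0 m), smul_eq_mul, mul_comm]
    rw [Finset.sum_congr rfl hterm]
    exact binom_mean lam hlam1 q
  constructor
  · rw [hint]; exact hE
  -- tail bound
  · set a : ℝ := (5 / 2) * s * (mu : ℝ) * p with hadef
    set t : ℝ := 9/50 with htdef
    have hPr2 : Pr {ω | (X ω : ℝ) ≤ a} = Pr {ω | (g ω : ℝ) ≤ a} := by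
      apply measure_congr
      rw [Filter.eventuallyEq_set]
      filter_upwards [hxg] with ω h
      simp [h]
    have hsub2 : {ω | (g ω : ℝ) ≤ a} ⊆
        {ω | lam < g ω} ∪ ⋃ m ∈ Finset.range (lam+1),
          ({ω | g ω = m} ∩ {ω | (m:ℝ) ≤ a}) := by
      intro ω hω
      simp only [Set.mem_setOf_eq] at hω
      by_cases hc : lam < g ω
      · exact Or.inl hc
      · right
        simp only [Set.mem_iUnion, Set.mem_inter_iff, Set.mem_setOf_eq]
        exact ⟨g ω, Finset.mem_range.mpr (by omega), rfl, hω⟩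
    have htermle : ∀ m ∈ Finset.range (lam+1),
        Pr ({ω | g ω = m} ∩ {ω | (m:ℝ) ≤ a})
          ≤ ENNReal.ofReal (f m * Real.exp (t * (a - m))) := by
      intro m _
      by_cases hma : (m:ℝ) ≤ a
      · have hset : {ω : Ω | g ω = m} ∩ {ω : Ω | (m:ℝ) ≤ a} = {ω | g ω = m} := by
          ext ω; simp [hma]
        rw [hset, hsetEq m]
        apply ENNReal.ofReal_le_ofReal
        have h1 : (1:ℝ) ≤ Real.exp (t * (a - m)) := by
          apply Real.one_le_exp
          have : (0:ℝ) ≤ a - m := by linarith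
          positivity
        nlinarith [hf0 m]
      · have hset : {ω : Ω | g ω = m} ∩ {ω : Ω | (m:ℝ) ≤ a} = (∅ : Set Ω) := by
          ext ω; simp [hma]
        rw [hset]
        simp
    have hbound : Pr {ω | (g ω : ℝ) ≤ a}
        ≤ ENNReal.ofReal (∑ m ∈ Finset.range (lam+1), f m * Real.exp (t * (a - m))) := by
      calc Pr {ω | (g ω : ℝ) ≤ a}
          ≤ Pr ({ω | lam < g ω} ∪ ⋃ m ∈ Finset.range (lam+1),
              ({ω | g ω = m} ∩ {ω | (m:ℝ) ≤ a})) := measure_mono hsub2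
        _ ≤ Pr {ω | lam < g ω} + Pr (⋃ m ∈ Finset.range (lam+1),
              ({ω | g ω = m} ∩ {ω | (m:ℝ) ≤ a})) := measure_union_le _ _
        _ = Pr (⋃ m ∈ Finset.range (lam+1),
              ({ω | g ω = m} ∩ {ω | (m:ℝ) ≤ a})) := by rw [hgt, zero_add]
        _ ≤ ∑ m ∈ Finset.range (lam+1), Pr ({ω | g ω = m} ∩ {ω | (m:ℝ) ≤ a}) :=
            measure_biUnion_finset_le _ _
        _ ≤ ∑ m ∈ Finset.range (lam+1), ENNReal.ofReal (f m * Real.exp (t * (a - m))) :=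
            Finset.sum_le_sum htermle
        _ = ENNReal.ofReal (∑ m ∈ Finset.range (lam+1), f m * Real.exp (t * (a - m))) :=
            (ENNReal.ofReal_sum_of_nonneg (fun m _ =>
              mul_nonneg (hf0 m) (Real.exp_pos _).le)).symm
    have hS : ∑ m ∈ Finset.range (lam+1), f m * Real.exp (t * (a - m))
        ≤ Real.exp (t * a - (lam:ℝ) * q * (1 - Real.exp (-t))) := by
      have hterm2 : ∀ m ∈ Finset.range (lam+1),
          f m * Real.exp (t * (a - m))
            = Real.exp (t * a) *
              ((lam.choose m : ℝ) * (q * Real.exp (-t)) ^ m * (1 - q) ^ (lam - m)) := by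
        intro m _
        have hx : Real.exp (t * (a - m)) = Real.exp (t * a) * Real.exp (-t) ^ m := by
          rw [← Real.exp_nat_mul, ← Real.exp_add]
          congr 1; ring
        rw [hfdef]
        simp only []
        rw [hx, mul_pow]
        ring
      rw [Finset.sum_congr rfl hterm2, ← Finset.mul_sum,
        binom_sum lam (q * Real.exp (-t)) (1 - q)]
      have hr0 : (0:ℝ) ≤ q * Real.exp (-t) + (1 - q) := by
        have := Real.exp_pos (-t)
        nlinarith
      have hrle : q * Real.exp (-t) + (1 - q) ≤ Real.exp (-(q * (1 - Real.exp (-t)))) := by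
        have h := Real.add_one_le_exp (-(q * (1 - Real.exp (-t))))
        nlinarith [h]
      have hpow : (q * Real.exp (-t) + (1 - q)) ^ lam
          ≤ Real.exp (-((lam:ℝ) * q * (1 - Real.exp (-t)))) := by
        calc (q * Real.exp (-t) + (1 - q)) ^ lam
            ≤ (Real.exp (-(q * (1 - Real.exp (-t))))) ^ lam :=
              pow_le_pow_left₀ hr0 hrle lam
          _ = Real.exp ((lam:ℝ) * (-(q * (1 - Real.exp (-t))))) :=
              (Real.exp_nat_mul _ lam).symm
          _ = Real.exp (-((lam:ℝ) * q * (1 - Real.exp (-t)))) := by congr 1; ring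
      calc Real.exp (t * a) * (q * Real.exp (-t) + (1 - q)) ^ lam
          ≤ Real.exp (t * a) * Real.exp (-((lam:ℝ) * q * (1 - Real.exp (-t)))) :=
            mul_le_mul_of_nonneg_left hpow (Real.exp_pos _).le
        _ = Real.exp (t * a - (lam:ℝ) * q * (1 - Real.exp (-t))) := by
            rw [← Real.exp_add]
            exact congrArg Real.exp (by ring)
    have hexpo : t * a - (lam:ℝ) * q * (1 - Real.exp (-t))
        ≤ -(s * (mu:ℝ) * b) / 24 := by
      have hkey := exp_bound_key
      have he1 : Real.exp (-(9/50:ℝ)) < 1 := Real.exp_lt_one_iff.mpr (by norm_num)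
      have h1 : 3 * s * (mu:ℝ) * p * (1 - Real.exp (-(9/50:ℝ)))
          ≤ (lam:ℝ) * q * (1 - Real.exp (-(9/50:ℝ))) :=
        mul_le_mul_of_nonneg_right hE (by linarith)
      have hA : 3 * s * (mu:ℝ) * p * Real.exp (-(9/50:ℝ))
          ≤ 3 * s * (mu:ℝ) * p * (301/360) :=
        mul_le_mul_of_nonneg_left hkey (by nlinarith)
      have hB : s * (mu:ℝ) * b ≤ s * (mu:ℝ) * p :=
        mul_le_mul_of_nonneg_left hbp hsm0
      rw [htdef, hadef]
      nlinarith [h1, hA, hB]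
    calc Pr {ω | (X ω : ℝ) ≤ (5 / 2) * s * (mu : ℝ) * p}
        = Pr {ω | (g ω : ℝ) ≤ a} := hPr2
      _ ≤ ENNReal.ofReal (∑ m ∈ Finset.range (lam+1), f m * Real.exp (t * (a - m))) := hbound
      _ ≤ ENNReal.ofReal (Real.exp (t * a - (lam:ℝ) * q * (1 - Real.exp (-t)))) :=
          ENNReal.ofReal_le_ofReal hS
      _ ≤ ENNReal.ofReal (Real.exp (-(s * (mu : ℝ) * b) / 24)) :=
          ENNReal.ofReal_le_ofReal (Real.exp_le_exp.mpr hexpo)
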